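/- Let 0 < m < M, let f : [m,M] → (0,∞) be concave and increasing, and let v ∈ [0,1]. Define K' = max over t ∈ [m,M] of f(t)·(a_g·t + b_g), where g = 1/f, a_g = (g(M)-g(m))/(M-m) and b_g = (M·g(m)-m·g(M))/(M-m). Then for all a, b ∈ [m, M]: f((1-v)·a + v·b) ≤ K' · ((1-v)·f(a) + v·f(b)). -/

import Mathlib

private lemma combo_pos (x y s : ℝ) (hx : 0 < x) (hy : 0 < y)
    (hs0 : 0 ≤ s) (hs1 : s ≤ 1) : 0 < (1 - s) * x + s * y := by
  rcases eq_or_lt_of_le hs1 with h | h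
  · subst h; simpa using hy
  · have h1 : 0 < (1 - s) * x := mul_pos (by linarith) hx
    nlinarith [mul_nonneg hs0 hy.le]

private lemma inv_combo_le (x y s : ℝ) (hx : 0 < x) (hy : 0 < y)
    (hs0 : 0 ≤ s) (hs1 : s ≤ 1) :
    ((1 - s) * x + s * y)⁻¹ ≤ (1 - s) * x⁻¹ + s * y⁻¹ := by
  have hc : 0 < (1 - s) * x + s * y := combo_pos x y s hx hy hs0 hs1
  rw [inv_eq_one_div, div_le_iff₀ hc, inv_eq_one_div, inv_eq_one_div]
  have h2 : 2 ≤ x / y + y / x := by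
    rw [div_add_div _ _ (ne_of_gt hy) (ne_of_gt hx), le_div_iff₀ (by positivity)]
    nlinarith [sq_nonneg (x - y)]
  field_simp
  nlinarith [mul_pos hx hy, sq_nonneg (x - y), mul_nonneg (mul_nonneg hs0 (by linarith : (0:ℝ) ≤ 1 - s)) (sq_nonneg (x - y))]

theorem mond_pecaric_concave_increasing (m M : ℝ) (hm : 0 < m) (hmM : m < M)
    (f : ℝ → ℝ) (hfpos : ∀ t ∈ Set.Icc m M, 0 < f t)
    (hconc : ConcaveOn ℝ (Set.Icc m M) f) (hinc : MonotoneOn f (Set.Icc m M))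
    (v : ℝ) (hv0 : 0 ≤ v) (hv1 : v ≤ 1) (K' : ℝ)
    (hK' : IsGreatest
      ((fun t => f t *
          ((((f M)⁻¹ - (f m)⁻¹) / (M - m)) * t + (M * (f m)⁻¹ - m * (f M)⁻¹) / (M - m))) ''
        Set.Icc m M) K')
    (a b : ℝ) (ha : a ∈ Set.Icc m M) (hb : b ∈ Set.Icc m M) :
    f ((1 - v) * a + v * b) ≤ K' * ((1 - v) * f a + v * f b) := by
  set ag : ℝ := ((f M)⁻¹ - (f m)⁻¹) / (M - m) with hag
  set bg : ℝ := (M * (f m)⁻¹ - m * (f M)⁻¹) / (M - m) with hbg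
  have hMm : (0:ℝ) < M - m := by linarith
  have hmI : m ∈ Set.Icc m M := ⟨le_refl _, le_of_lt hmM⟩
  have hMI : M ∈ Set.Icc m M := ⟨le_of_lt hmM, le_refl _⟩
  have hfm : 0 < f m := hfpos m hmI
  have hfM : 0 < f M := hfpos M hMI
  -- the secant of g = 1/f dominates g on [m,M]
  have hsec : ∀ t ∈ Set.Icc m M, (f t)⁻¹ ≤ ag * t + bg := by
    intro t ht
    set s : ℝ := (t - m) / (M - m) with hsdef
    have hs0 : 0 ≤ s := div_nonneg (by linarith [ht.1]) (le_of_lt hMm)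
    have hs1 : s ≤ 1 := by
      rw [hsdef, div_le_one hMm]; linarith [ht.2]
    have hteq : t = (1 - s) * m + s * M := by
      have h : s * (M - m) = t - m := by rw [hsdef]; exact div_mul_cancel₀ _ hMm.ne'
      linear_combination -h
    have hcomb : (1 - s) * f m + s * f M ≤ f t := by
      have := hconc.2 hmI hMI (by linarith : (0:ℝ) ≤ 1 - s) hs0 (by ring)
      simpa [smul_eq_mul, ← hteq] using this
    have hL : ag * t + bg = (1 - s) * (f m)⁻¹ + s * (f M)⁻¹ := by
      rw [hag, hbg, hsdef]; field_simp; ring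
    rw [hL]
    calc (f t)⁻¹ ≤ ((1 - s) * f m + s * f M)⁻¹ := by
          apply inv_anti₀ (combo_pos _ _ _ hfm hfM hs0 hs1) hcomb
      _ ≤ (1 - s) * (f m)⁻¹ + s * (f M)⁻¹ := inv_combo_le _ _ _ hfm hfM hs0 hs1
  set c : ℝ := (1 - v) * a + v * b with hc
  have hcI : c ∈ Set.Icc m M := by
    constructor <;> nlinarith [ha.1, ha.2, hb.1, hb.2]
  have hfc : 0 < f c := hfpos c hcI
  have hfa : 0 < f a := hfpos a ha
  have hfb : 0 < f b := hfpos b hb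
  have hLc : ag * c + bg = (1 - v) * (ag * a + bg) + v * (ag * b + bg) := by ring
  have hga : (f a)⁻¹ ≤ ag * a + bg := hsec a ha
  have hgb : (f b)⁻¹ ≤ ag * b + bg := hsec b hb
  have hcomb2 : (1 - v) * (f a)⁻¹ + v * (f b)⁻¹ ≤ ag * c + bg := by
    rw [hLc]
    have h1 : 0 ≤ 1 - v := by linarith
    exact add_le_add (mul_le_mul_of_nonneg_left hga h1) (mul_le_mul_of_nonneg_left hgb hv0)
  have hpos2 : 0 < (1 - v) * (f a)⁻¹ + v * (f b)⁻¹ :=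
    combo_pos _ _ _ (by positivity) (by positivity) hv0 hv1
  have hLcpos : 0 < ag * c + bg := lt_of_lt_of_le hpos2 hcomb2
  -- AM-HM for a, b
  have hamhm : (ag * c + bg)⁻¹ ≤ (1 - v) * f a + v * f b := by
    calc (ag * c + bg)⁻¹ ≤ ((1 - v) * (f a)⁻¹ + v * (f b)⁻¹)⁻¹ :=
          inv_anti₀ hpos2 hcomb2
      _ ≤ (1 - v) * ((f a)⁻¹)⁻¹ + v * ((f b)⁻¹)⁻¹ :=
          inv_combo_le _ _ _ (by positivity) (by positivity) hv0 hv1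
      _ = (1 - v) * f a + v * f b := by rw [inv_inv, inv_inv]
  have hKc : f c * (ag * c + bg) ≤ K' := hK'.2 ⟨c, hcI, rfl⟩
  have h1 : 1 ≤ f c * (ag * c + bg) := by
    have := hsec c hcI
    calc (1:ℝ) = f c * (f c)⁻¹ := by rw [mul_inv_cancel₀ (ne_of_gt hfc)]
      _ ≤ f c * (ag * c + bg) := by
          exact mul_le_mul_of_nonneg_left this (le_of_lt hfc)
  have hK'pos : 0 < K' := lt_of_lt_of_le one_pos (le_trans h1 hKc)
  calc f c = f c * (ag * c + bg) * (ag * c + bg)⁻¹ := by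
        field_simp
    _ ≤ K' * (ag * c + bg)⁻¹ :=
        mul_le_mul_of_nonneg_right hKc (by positivity)
    _ ≤ K' * ((1 - v) * f a + v * f b) :=
        mul_le_mul_of_nonneg_left hamhm (le_of_lt hK'pos)
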